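/- Let g and d be integers with g ≥ 2 and d ≥ 2g + 2, let H(t) = 1 + Σ_{n≥1} (nd + 1 − g)·t^n as a formal power series over ℚ, and let b_j denote the coefficient of t^j in B(t) = (1−t)^{d−g+1}·H(t). Then (−1)^{d−2g}·b_{d−2g+2} = ((d − g² + g)/(d − 2g + 2))·C(d−g−1, g−1) as rational numbers, where C(d−g−1, g−1) is the binomial coefficient 'd−g−1 choose g−1'. -/

import Mathlib

open PowerSeries Finset in
private lemma coeff_one_sub_X_pow_aux (m n : ℕ) :
    PowerSeries.coeff (R := ℚ) n ((1 - PowerSeries.X) ^ m) = (-1 : ℚ) ^ n * (m.choose n) := by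
  have h : ((1 : PowerSeries ℚ) - X) ^ m
      = ∑ k ∈ range (m + 1), PowerSeries.C (R := ℚ) ((-1 : ℚ) ^ k * m.choose k) * X ^ k := by
    rw [sub_eq_add_neg, add_comm, add_pow]
    refine Finset.sum_congr rfl fun k hk => ?_
    rw [neg_pow, map_mul, map_pow, map_neg, map_one, map_natCast]
    ring
  rw [h, map_sum]
  simp only [PowerSeries.coeff_C_mul_X_pow]
  rcases lt_or_ge n (m + 1) with hn | hn
  · rw [Finset.sum_ite_eq (range (m + 1)) n, if_pos (Finset.mem_range.2 hn)]
  · rw [Finset.sum_eq_zero, Nat.choose_eq_zero_of_lt (by omega)]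
    · simp
    · intro k hk
      rw [if_neg]
      exact fun h => by simp [h] at hk; omega

open PowerSeries Finset in
private lemma one_sub_X_sq_mul_H_aux (g d : ℕ)
    (H : PowerSeries ℚ)
    (hH : H = PowerSeries.mk fun n => if n = 0 then 1 else (n : ℚ) * d + 1 - g) :
    (1 - PowerSeries.X) ^ 2 * H
      = 1 + PowerSeries.C (R := ℚ) ((d : ℚ) - g - 1) * PowerSeries.X ^ 1
          + PowerSeries.C (R := ℚ) (g : ℚ) * PowerSeries.X ^ 2 := by
  have hexp : ((1 : PowerSeries ℚ) - X) ^ 2 * H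
      = H - PowerSeries.C (R := ℚ) 2 * (X ^ 1 * H) + X ^ 2 * H := by
    rw [map_ofNat]; ring
  have cH : ∀ n : ℕ, coeff (R := ℚ) n H = if n = 0 then 1 else (n : ℚ) * d + 1 - g := by
    intro n; rw [hH, coeff_mk]
  have cXH : ∀ k n : ℕ, coeff (R := ℚ) n (X ^ k * H)
      = if k ≤ n then (if n - k = 0 then 1 else ((n - k : ℕ) : ℚ) * d + 1 - g) else 0 := by
    intro k n; rw [hH, PowerSeries.coeff_X_pow_mul']
    simp only [coeff_mk]
  ext n
  rw [hexp, map_add, map_sub, map_add, map_add, coeff_C_mul, cXH, cXH, cH,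
    PowerSeries.coeff_C_mul_X_pow, PowerSeries.coeff_C_mul_X_pow, PowerSeries.coeff_one]
  rcases n with _ | _ | _ | n <;>
    split_ifs <;>
      first
      | omega
      | contradiction
      | (push_cast [Nat.succ_sub_succ, Nat.succ_sub_one]; ring)

/-- Let `g ≥ 2` and `d ≥ 2g + 2` be integers, let
`H(t) = 1 + ∑_{n ≥ 1} (nd + 1 - g) tⁿ` as a formal power series over `ℚ`, and let `b j`
denote the coefficient of `t^j` in `B(t) = (1-t)^(d-g+1) * H(t)`.  Then
`(-1)^(d-2g) * b_(d-2g+2) = ((d - g² + g)/(d - 2g + 2)) * C(d-g-1, g-1)`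
as rational numbers. -/
theorem minimal_resolution_conjecture_curves_hilbert_coefficient
    (g d : ℕ) (hg : 2 ≤ g) (hd : 2 * g + 2 ≤ d)
    (H B : PowerSeries ℚ)
    (hH : H = PowerSeries.mk fun n => if n = 0 then 1 else (n : ℚ) * d + 1 - g)
    (hB : B = (1 - PowerSeries.X) ^ (d - g + 1) * H) :
    (-1 : ℚ) ^ (d - 2 * g) * PowerSeries.coeff (R := ℚ) (d - 2 * g + 2) B
      = (((d : ℚ) - (g : ℚ) ^ 2 + g) / ((d : ℚ) - 2 * g + 2))
          * ((d - g - 1).choose (g - 1) : ℚ) := by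
  obtain ⟨G, rfl⟩ : ∃ G, g = G + 2 := ⟨g - 2, by omega⟩
  obtain ⟨e, rfl⟩ : ∃ e, d = e + 2 * G + 6 := ⟨d - (2 * G + 6), by omega⟩
  set g : ℕ := G + 2 with hgdef
  set d : ℕ := e + 2 * G + 6 with hddef
  set m : ℕ := e + G + 3 with hmdef
  have hP := one_sub_X_sq_mul_H_aux g d H hH
  have hBP : B = (1 - PowerSeries.X) ^ m
      + PowerSeries.C (R := ℚ) ((d : ℚ) - g - 1) * ((1 - PowerSeries.X) ^ m * PowerSeries.X ^ 1)
      + PowerSeries.C (R := ℚ) (g : ℚ) * ((1 - PowerSeries.X) ^ m * PowerSeries.X ^ 2) := by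
    rw [hB, show d - g + 1 = m + 2 by omega, pow_add, mul_assoc, hP]
    ring
  have hsub : d - 2 * g = e + 2 := by omega
  rw [hsub, hBP, map_add, map_add, PowerSeries.coeff_C_mul, PowerSeries.coeff_C_mul,
    PowerSeries.coeff_mul_X_pow', PowerSeries.coeff_mul_X_pow',
    if_pos (by omega : (1:ℕ) ≤ e + 2 + 2), if_pos (by omega : (2:ℕ) ≤ e + 2 + 2),
    show e + 2 + 2 - 1 = e + 3 from rfl, show e + 2 + 2 - 2 = e + 2 from rfl,
    coeff_one_sub_X_pow_aux, coeff_one_sub_X_pow_aux, coeff_one_sub_X_pow_aux]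
  have hchoose : ((d - g - 1).choose (g - 1) : ℚ) = (m.choose (e + 2) : ℚ) := by
    congr 1
    rw [show d - g - 1 = m by omega, show g - 1 = G + 1 by omega,
      show G + 1 = m - (e + 2) by omega, Nat.choose_symm (by omega)]
  rw [hchoose]
  have r1 : (m.choose (e + 3) : ℚ) * (e + 3) = (m.choose (e + 2) : ℚ) * (G + 1) := by
    have h := Nat.choose_succ_right_eq m (e + 2)
    rw [show m - (e + 2) = G + 1 by omega] at h
    exact_mod_cast h
  have r2 : (m.choose (e + 4) : ℚ) * (e + 4) = (m.choose (e + 3) : ℚ) * G := by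
    have h := Nat.choose_succ_right_eq m (e + 3)
    rw [show m - (e + 3) = G by omega] at h
    exact_mod_cast h
  have hc1 : (m.choose (e + 3) : ℚ) = ((G : ℚ) + 1) / ((e : ℚ) + 3) * (m.choose (e + 2) : ℚ) := by
    field_simp
    linear_combination r1
  have hc2 : (m.choose (e + 4) : ℚ) = (G : ℚ) / ((e : ℚ) + 4) * (m.choose (e + 3) : ℚ) := by
    field_simp
    linear_combination r2
  rw [show e + 2 + 2 = e + 4 from rfl, hc2, hc1]
  have h1 : ((e : ℚ) + 3) ≠ 0 := by positivity
  have h2 : ((e : ℚ) + 4) ≠ 0 := by positivity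
  have h3 : ((d : ℚ) - 2 * g + 2) = (e : ℚ) + 4 := by
    rw [hgdef, hddef]; push_cast; ring
  rw [h3, hgdef, hddef]
  push_cast
  have hs : ((-1 : ℚ)) ^ (e * 2) = 1 := by
    rw [mul_comm, pow_mul]; norm_num
  field_simp
  ring_nf
  simp only [hs]
  ring_nf
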